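/- Define the B_R-Hamiltonian of a convex function L : ℝ^N × ℝ^N → ℝ by H_L(x,y) = sup_{p ∈ B_R} {⟨x,p⟩ − L(y,p)}. If H ∈ C(Ω̄ × Ω̄) satisfies H(x,y) ≤ −H(y,x), then the function H_{L_H**} satisfies H_{L_H**}(x,y) ≤ −H_{L_H**}(y,x) for all x,y ∈ Ω̄. -/

import Mathlib

open MeasureTheory Set

noncomputable section

variable {N : ℕ}

/-- `L_H(x,p) = sup_{y ∈ Ω̄} {⟨y,p⟩ - H(y,x)}`. -/
def LH (Ω : Set (EuclideanSpace ℝ (Fin N)))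
    (H : EuclideanSpace ℝ (Fin N) → EuclideanSpace ℝ (Fin N) → ℝ)
    (x p : EuclideanSpace ℝ (Fin N)) : ℝ :=
  ⨆ y : closure Ω, ((inner ℝ (y : EuclideanSpace ℝ (Fin N)) p : ℝ) - H y x)

/-- Restricted Fenchel dual `L_H*(q,y) = sup_{x ∈ Ω̄, p ∈ B_R} {⟨y,p⟩ + ⟨q,x⟩ - L_H(x,p)}`. -/
def LHstar (Ω : Set (EuclideanSpace ℝ (Fin N))) (R : ℝ)
    (H : EuclideanSpace ℝ (Fin N) → EuclideanSpace ℝ (Fin N) → ℝ)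
    (q y : EuclideanSpace ℝ (Fin N)) : ℝ :=
  ⨆ x : closure Ω, ⨆ p : Metric.closedBall (0 : EuclideanSpace ℝ (Fin N)) R,
    ((inner ℝ y (p : EuclideanSpace ℝ (Fin N)) : ℝ)
      + (inner ℝ q (x : EuclideanSpace ℝ (Fin N)) : ℝ) - LH Ω H x p)

/-- `L_H**(y,q) = sup_{x ∈ Ω̄, p ∈ B_R} {⟨y,p⟩ + ⟨q,x⟩ - L_H*(p,x)}`. -/
def LHstarstar (Ω : Set (EuclideanSpace ℝ (Fin N))) (R : ℝ)
    (H : EuclideanSpace ℝ (Fin N) → EuclideanSpace ℝ (Fin N) → ℝ)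
    (y q : EuclideanSpace ℝ (Fin N)) : ℝ :=
  ⨆ x : closure Ω, ⨆ p : Metric.closedBall (0 : EuclideanSpace ℝ (Fin N)) R,
    ((inner ℝ y (p : EuclideanSpace ℝ (Fin N)) : ℝ)
      + (inner ℝ q (x : EuclideanSpace ℝ (Fin N)) : ℝ) - LHstar Ω R H p x)

/-- The `B_R`-Hamiltonian of `L`: `H_L(x,y) = sup_{p ∈ B_R} {⟨x,p⟩ - L(y,p)}`. -/
def HLB (R : ℝ)
    (L : EuclideanSpace ℝ (Fin N) → EuclideanSpace ℝ (Fin N) → ℝ)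
    (x y : EuclideanSpace ℝ (Fin N)) : ℝ :=
  ⨆ p : Metric.closedBall (0 : EuclideanSpace ℝ (Fin N)) R,
    ((inner ℝ x (p : EuclideanSpace ℝ (Fin N)) : ℝ) - L y p)

end

/-- Lemma 2.6: if `H(x,y) ≤ -H(y,x)` on `Ω̄ × Ω̄`, then the `B_R`-Hamiltonian of
`L_H**` satisfies the same skew-symmetry inequality on `Ω̄ × Ω̄`. -/
theorem HLB_LHstarstar_skew {N : ℕ} (R : ℝ) (hR : 0 < R)
    (Ω : Set (EuclideanSpace ℝ (Fin N))) (hΩopen : IsOpen Ω)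
    (hΩ : Ω ⊆ Metric.closedBall (0 : EuclideanSpace ℝ (Fin N)) R)
    (hΩne : Ω.Nonempty)
    (H : EuclideanSpace ℝ (Fin N) → EuclideanSpace ℝ (Fin N) → ℝ)
    (hHcont : ContinuousOn (fun q : EuclideanSpace ℝ (Fin N) × EuclideanSpace ℝ (Fin N) =>
      H q.1 q.2) ((closure Ω) ×ˢ (closure Ω)))
    (hHskew : ∀ x ∈ closure Ω, ∀ y ∈ closure Ω, H x y ≤ - H y x) :
    ∀ x ∈ closure Ω, ∀ y ∈ closure Ω,
      HLB R (LHstarstar Ω R H) x y ≤ - HLB R (LHstarstar Ω R H) y x := by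
  classical
  have hR0 : (0:ℝ) ≤ R := hR.le
  obtain ⟨x₀, hx₀Ω⟩ := hΩne
  have hx₀ : x₀ ∈ closure Ω := subset_closure hx₀Ω
  haveI hne₁ : Nonempty (closure Ω) := ⟨⟨x₀, hx₀⟩⟩
  haveI hne₂ : Nonempty (Metric.closedBall (0 : EuclideanSpace ℝ (Fin N)) R) :=
    ⟨⟨0, Metric.mem_closedBall_self hR0⟩⟩
  have hK₁R : closure Ω ⊆ Metric.closedBall (0 : EuclideanSpace ℝ (Fin N)) R :=
    closure_minimal hΩ Metric.isClosed_closedBall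
  have hn₁ : ∀ a ∈ closure Ω, ‖a‖ ≤ R := fun a ha => mem_closedBall_zero_iff.mp (hK₁R ha)
  have hn₂ : ∀ p ∈ Metric.closedBall (0 : EuclideanSpace ℝ (Fin N)) R, ‖p‖ ≤ R :=
    fun p hp => mem_closedBall_zero_iff.mp hp
  have hip : ∀ a b : EuclideanSpace ℝ (Fin N), ‖a‖ ≤ R → ‖b‖ ≤ R → |(inner ℝ a b : ℝ)| ≤ R*R :=
    fun a b ha hb => (abs_real_inner_le_norm a b).trans
      (mul_le_mul ha hb (norm_nonneg _) hR0)
  have hK₁c : IsCompact (closure Ω) :=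
    (isCompact_closedBall (0 : EuclideanSpace ℝ (Fin N)) R).of_isClosed_subset
      isClosed_closure hK₁R
  obtain ⟨C, hC⟩ := (hK₁c.prod hK₁c).exists_bound_of_continuousOn hHcont
  have hHb : ∀ a ∈ closure Ω, ∀ b ∈ closure Ω, |H a b| ≤ C := by
    intro a ha b hb
    simpa [Real.norm_eq_abs] using hC (a, b) (Set.mk_mem_prod ha hb)
  -- LH lemmas
  have hLH_bdd : ∀ x ∈ closure Ω, ∀ p : EuclideanSpace ℝ (Fin N), ‖p‖ ≤ R →
      BddAbove (Set.range fun y : closure Ω =>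
        ((inner ℝ (y : EuclideanSpace ℝ (Fin N)) p : ℝ) - H y x)) := by
    intro x hx p hp
    refine ⟨R*R + C, ?_⟩
    rintro r ⟨y, rfl⟩
    have h1 := (abs_le.mp (hip y p (hn₁ y y.2) hp)).2
    have h2 := (abs_le.mp (hHb y y.2 x hx)).1
    simp only
    linarith
  have hLH_ge : ∀ x ∈ closure Ω, ∀ p : EuclideanSpace ℝ (Fin N), ‖p‖ ≤ R →
      ∀ a ∈ closure Ω, (inner ℝ a p : ℝ) - H a x ≤ LH Ω H x p := by
    intro x hx p hp a ha
    exact le_ciSup (hLH_bdd x hx p hp) ⟨a, ha⟩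
  have hLH_le : ∀ x ∈ closure Ω, ∀ p : EuclideanSpace ℝ (Fin N), ‖p‖ ≤ R →
      LH Ω H x p ≤ R*R + C := by
    intro x hx p hp
    refine ciSup_le fun y => ?_
    have h1 := (abs_le.mp (hip y p (hn₁ y y.2) hp)).2
    have h2 := (abs_le.mp (hHb y y.2 x hx)).1
    linarith
  have hLH_lb : ∀ x ∈ closure Ω, ∀ p : EuclideanSpace ℝ (Fin N), ‖p‖ ≤ R →
      -(R*R + C) ≤ LH Ω H x p := by
    intro x hx p hp
    have h := hLH_ge x hx p hp x₀ hx₀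
    have h1 := (abs_le.mp (hip x₀ p (hn₁ x₀ hx₀) hp)).1
    have h2 := (abs_le.mp (hHb x₀ hx₀ x hx)).2
    linarith
  -- LHstar lemmas
  have hS_term : ∀ q y : EuclideanSpace ℝ (Fin N), ‖q‖ ≤ R → ‖y‖ ≤ R →
      ∀ (x : closure Ω) (p : Metric.closedBall (0 : EuclideanSpace ℝ (Fin N)) R),
      ((inner ℝ y (p : EuclideanSpace ℝ (Fin N)) : ℝ)
        + (inner ℝ q (x : EuclideanSpace ℝ (Fin N)) : ℝ) - LH Ω H x p) ≤ 3*(R*R) + C := by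
    intro q y hq hy x p
    have h1 := (abs_le.mp (hip y p hy (hn₂ p p.2))).2
    have h2 := (abs_le.mp (hip q x hq (hn₁ x x.2))).2
    have h3 := hLH_lb x x.2 p (hn₂ p p.2)
    linarith
  have hS_ibdd : ∀ q y : EuclideanSpace ℝ (Fin N), ‖q‖ ≤ R → ‖y‖ ≤ R →
      ∀ x : closure Ω,
      BddAbove (Set.range fun p : Metric.closedBall (0 : EuclideanSpace ℝ (Fin N)) R =>
        ((inner ℝ y (p : EuclideanSpace ℝ (Fin N)) : ℝ)
          + (inner ℝ q (x : EuclideanSpace ℝ (Fin N)) : ℝ) - LH Ω H x p)) := by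
    intro q y hq hy x
    refine ⟨3*(R*R) + C, ?_⟩
    rintro r ⟨p, rfl⟩
    exact hS_term q y hq hy x p
  have hS_obdd : ∀ q y : EuclideanSpace ℝ (Fin N), ‖q‖ ≤ R → ‖y‖ ≤ R →
      BddAbove (Set.range fun x : closure Ω =>
        ⨆ p : Metric.closedBall (0 : EuclideanSpace ℝ (Fin N)) R,
        ((inner ℝ y (p : EuclideanSpace ℝ (Fin N)) : ℝ)
          + (inner ℝ q (x : EuclideanSpace ℝ (Fin N)) : ℝ) - LH Ω H x p)) := by
    intro q y hq hy
    refine ⟨3*(R*R) + C, ?_⟩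
    rintro r ⟨x, rfl⟩
    exact ciSup_le fun p => hS_term q y hq hy x p
  have hS_ge : ∀ q y : EuclideanSpace ℝ (Fin N), ‖q‖ ≤ R → ‖y‖ ≤ R →
      ∀ a ∈ closure Ω, ∀ b ∈ Metric.closedBall (0 : EuclideanSpace ℝ (Fin N)) R,
      (inner ℝ y b : ℝ) + (inner ℝ q a : ℝ) - LH Ω H a b ≤ LHstar Ω R H q y := by
    intro q y hq hy a ha b hb
    have h1 : ((inner ℝ y ((⟨b, hb⟩ : Metric.closedBall (0 : EuclideanSpace ℝ (Fin N)) R)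
          : EuclideanSpace ℝ (Fin N)) : ℝ)
        + (inner ℝ q ((⟨a, ha⟩ : closure Ω) : EuclideanSpace ℝ (Fin N)) : ℝ)
        - LH Ω H (⟨a, ha⟩ : closure Ω) (⟨b, hb⟩ : Metric.closedBall _ R)) ≤
        ⨆ p : Metric.closedBall (0 : EuclideanSpace ℝ (Fin N)) R,
        ((inner ℝ y (p : EuclideanSpace ℝ (Fin N)) : ℝ)
          + (inner ℝ q ((⟨a, ha⟩ : closure Ω) : EuclideanSpace ℝ (Fin N)) : ℝ)
          - LH Ω H (⟨a, ha⟩ : closure Ω) p) :=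
      le_ciSup (hS_ibdd q y hq hy ⟨a, ha⟩) ⟨b, hb⟩
    have h2 := le_ciSup (hS_obdd q y hq hy) (⟨a, ha⟩ : closure Ω)
    exact le_trans h1 h2
  have hS_lb : ∀ p : EuclideanSpace ℝ (Fin N), ‖p‖ ≤ R → ∀ x ∈ closure Ω,
      -(3*(R*R) + C) ≤ LHstar Ω R H p x := by
    intro p hp x hx
    have h := hS_ge p x hp (hn₁ x hx) x₀ hx₀ 0 (Metric.mem_closedBall_self hR0)
    have h0 : (inner ℝ x (0 : EuclideanSpace ℝ (Fin N)) : ℝ) = 0 := inner_zero_right x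
    have h1 := (abs_le.mp (hip p x₀ hp (hn₁ x₀ hx₀))).1
    have h2 := hLH_le x₀ hx₀ 0 (by simpa using hR0)
    have hRR : 0 ≤ R * R := mul_nonneg hR0 hR0
    rw [h0] at h
    linarith
  have hS_le : ∀ q y : EuclideanSpace ℝ (Fin N), ‖q‖ ≤ R → ‖y‖ ≤ R →
      LHstar Ω R H q y ≤ 3*(R*R) + C := by
    intro q y hq hy
    exact ciSup_le fun x => ciSup_le fun p => hS_term q y hq hy x p
  -- LHstarstar lemmas
  have hSS_term : ∀ Y Q : EuclideanSpace ℝ (Fin N), ‖Y‖ ≤ R → ‖Q‖ ≤ R →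
      ∀ (x : closure Ω) (p : Metric.closedBall (0 : EuclideanSpace ℝ (Fin N)) R),
      ((inner ℝ Y (p : EuclideanSpace ℝ (Fin N)) : ℝ)
        + (inner ℝ Q (x : EuclideanSpace ℝ (Fin N)) : ℝ) - LHstar Ω R H p x) ≤ 5*(R*R) + C := by
    intro Y Q hY hQ x p
    have h1 := (abs_le.mp (hip Y p hY (hn₂ p p.2))).2
    have h2 := (abs_le.mp (hip Q x hQ (hn₁ x x.2))).2
    have h3 := hS_lb p (hn₂ p p.2) x x.2
    linarith
  have hSS_ibdd : ∀ Y Q : EuclideanSpace ℝ (Fin N), ‖Y‖ ≤ R → ‖Q‖ ≤ R →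
      ∀ x : closure Ω,
      BddAbove (Set.range fun p : Metric.closedBall (0 : EuclideanSpace ℝ (Fin N)) R =>
        ((inner ℝ Y (p : EuclideanSpace ℝ (Fin N)) : ℝ)
          + (inner ℝ Q (x : EuclideanSpace ℝ (Fin N)) : ℝ) - LHstar Ω R H p x)) := by
    intro Y Q hY hQ x
    refine ⟨5*(R*R) + C, ?_⟩
    rintro r ⟨p, rfl⟩
    exact hSS_term Y Q hY hQ x p
  have hSS_obdd : ∀ Y Q : EuclideanSpace ℝ (Fin N), ‖Y‖ ≤ R → ‖Q‖ ≤ R →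
      BddAbove (Set.range fun x : closure Ω =>
        ⨆ p : Metric.closedBall (0 : EuclideanSpace ℝ (Fin N)) R,
        ((inner ℝ Y (p : EuclideanSpace ℝ (Fin N)) : ℝ)
          + (inner ℝ Q (x : EuclideanSpace ℝ (Fin N)) : ℝ) - LHstar Ω R H p x)) := by
    intro Y Q hY hQ
    refine ⟨5*(R*R) + C, ?_⟩
    rintro r ⟨x, rfl⟩
    exact ciSup_le fun p => hSS_term Y Q hY hQ x p
  have hSS_ge : ∀ Y Q : EuclideanSpace ℝ (Fin N), ‖Y‖ ≤ R → ‖Q‖ ≤ R →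
      ∀ a ∈ closure Ω, ∀ b ∈ Metric.closedBall (0 : EuclideanSpace ℝ (Fin N)) R,
      (inner ℝ Y b : ℝ) + (inner ℝ Q a : ℝ) - LHstar Ω R H b a ≤ LHstarstar Ω R H Y Q := by
    intro Y Q hY hQ a ha b hb
    have h1 : ((inner ℝ Y ((⟨b, hb⟩ : Metric.closedBall (0 : EuclideanSpace ℝ (Fin N)) R)
          : EuclideanSpace ℝ (Fin N)) : ℝ)
        + (inner ℝ Q ((⟨a, ha⟩ : closure Ω) : EuclideanSpace ℝ (Fin N)) : ℝ)
        - LHstar Ω R H (⟨b, hb⟩ : Metric.closedBall _ R) (⟨a, ha⟩ : closure Ω)) ≤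
        ⨆ p : Metric.closedBall (0 : EuclideanSpace ℝ (Fin N)) R,
        ((inner ℝ Y (p : EuclideanSpace ℝ (Fin N)) : ℝ)
          + (inner ℝ Q ((⟨a, ha⟩ : closure Ω) : EuclideanSpace ℝ (Fin N)) : ℝ)
          - LHstar Ω R H p (⟨a, ha⟩ : closure Ω)) :=
      le_ciSup (hSS_ibdd Y Q hY hQ ⟨a, ha⟩) ⟨b, hb⟩
    have h2 := le_ciSup (hSS_obdd Y Q hY hQ) (⟨a, ha⟩ : closure Ω)
    exact le_trans h1 h2
  -- key step 1: LHstar(p,x) ≤ LH(x,p)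
  have key1 : ∀ x ∈ closure Ω, ∀ p : EuclideanSpace ℝ (Fin N), ‖p‖ ≤ R →
      LHstar Ω R H p x ≤ LH Ω H x p := by
    intro x hx p hp
    refine ciSup_le fun a => ciSup_le fun b => ?_
    have h1 : (inner ℝ x (b : EuclideanSpace ℝ (Fin N)) : ℝ) - H x a ≤ LH Ω H a b :=
      hLH_ge a a.2 b (hn₂ b b.2) x hx
    have h2 : H x a ≤ - H a x := hHskew x hx a a.2
    have h3 : (inner ℝ (a : EuclideanSpace ℝ (Fin N)) p : ℝ) - H a x ≤ LH Ω H x p :=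
      hLH_ge x hx p hp a a.2
    have hcomm : (inner ℝ p (a : EuclideanSpace ℝ (Fin N)) : ℝ)
        = (inner ℝ (a : EuclideanSpace ℝ (Fin N)) p : ℝ) := real_inner_comm _ _
    linarith
  -- key step 2: LHstar(q,y) ≤ LHstarstar(y,q)
  have key2 : ∀ q y : EuclideanSpace ℝ (Fin N), ‖q‖ ≤ R → ‖y‖ ≤ R →
      LHstar Ω R H q y ≤ LHstarstar Ω R H y q := by
    intro q y hq hy
    refine ciSup_le fun x' => ciSup_le fun p' => ?_
    have h1 := key1 x' x'.2 p' (hn₂ p' p'.2)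
    have h2 := hSS_ge y q hy hq x' x'.2 p' p'.2
    linarith
  -- conclusion
  intro x hx y hy
  refine ciSup_le fun p => ?_
  rw [le_neg]
  refine ciSup_le fun q => ?_
  have h1 := hSS_ge y p (hn₁ y hy) (hn₂ p p.2) x hx q q.2
  have h2 := key2 q x (hn₂ q q.2) (hn₁ x hx)
  have hcomm : (inner ℝ (p : EuclideanSpace ℝ (Fin N)) x : ℝ)
      = (inner ℝ x (p : EuclideanSpace ℝ (Fin N)) : ℝ) := real_inner_comm _ _
  linarith
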